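/- Let n > 1 and b = (b₁,…,bₙ), b' = (b'₁,…,b'ₙ) ∈ ℤⁿ. The graded rings ℤ[x₁,x₂]/⟨x₁∏ᵢ(x₁+bᵢx₂), x₂²⟩ and ℤ[x₁,x₂]/⟨x₁∏ᵢ(x₁+b'ᵢx₂), x₂²⟩ are isomorphic if and only if there exists ε = ±1 such that ε·Σᵢbᵢ ≡ Σᵢb'ᵢ (mod n+1). -/

import Mathlib

open MvPolynomial

def IsGradedIso (I J : Ideal (MvPolynomial (Fin 2) ℤ)) : Prop :=
  ∃ g : Fin 2 → MvPolynomial (Fin 2) ℤ,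
    (∀ i, (g i).IsHomogeneous 1) ∧
    Function.Bijective ⇑(MvPolynomial.aeval (R := ℤ) g) ∧
    Ideal.map (MvPolynomial.aeval (R := ℤ) g) I = J



-- degree of a Finsupp on Fin 2
private lemma deg2 (d : Fin 2 →₀ ℕ) : d.degree = d 0 + d 1 := by
  rw [Finsupp.degree_apply, Finset.sum_subset (Finset.subset_univ _)]
  · exact Fin.sum_univ_two d
  · intro x _ hx; exact Finsupp.notMem_support_iff.mp hx

private lemma homog_one_decomp (f : MvPolynomial (Fin 2) ℤ) (h : f.IsHomogeneous 1) :
    f = C (coeff (Finsupp.single 0 1) f) * X 0 + C (coeff (Finsupp.single 1 1) f) * X 1 := by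
  apply MvPolynomial.ext
  intro m
  rw [coeff_add, coeff_C_mul, coeff_C_mul, coeff_X', coeff_X']
  by_cases h0 : m = Finsupp.single 0 1
  · subst h0
    have : ¬ (Finsupp.single 1 1 = Finsupp.single (0 : Fin 2) 1) := by
      intro hc
      have := DFunLike.congr_fun hc 1
      simp [Finsupp.single_apply] at this
    simp [this]
  by_cases h1 : m = Finsupp.single 1 1
  · subst h1
    have : ¬ (Finsupp.single 0 1 = Finsupp.single (1 : Fin 2) 1) := by
      intro hc
      have := DFunLike.congr_fun hc 1
      simp [Finsupp.single_apply] at this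
    simp [this]
  · have hz : coeff m f = 0 := by
      apply h.coeff_eq_zero
      intro hd
      rw [deg2] at hd
      -- m 0 + m 1 = 1
      rcases Nat.add_eq_one_iff.mp hd with ⟨ha, hb⟩ | ⟨ha, hb⟩
      · apply h1; ext i; fin_cases i <;> simp [Finsupp.single_apply, ha, hb]
      · apply h0; ext i; fin_cases i <;> simp [Finsupp.single_apply, ha, hb]
    rw [hz]
    have e0 : ¬ (Finsupp.single (0:Fin 2) 1 = m) := fun hc => h0 hc.symm
    have e1 : ¬ (Finsupp.single (1:Fin 2) 1 = m) := fun hc => h1 hc.symm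
    simp [e0, e1]

private lemma key_dvd {ι : Type*} [DecidableEq ι] (s : Finset ι) (c : ι → ℤ) (p d : ℤ) :
    (X 1 : MvPolynomial (Fin 2) ℤ)^2 ∣
      (C p * X 0 + C d * X 1) * ∏ i ∈ s, (C p * X 0 + C (c i) * X 1)
        - ((C p)^(s.card+1) * X 0^(s.card+1)
            + (C p)^s.card * (C d + ∑ i ∈ s, C (c i)) * X 0^s.card * X 1) := by
  induction s using Finset.induction_on with
  | empty => exact ⟨0, by simp⟩
  | insert a s ha ih =>
    obtain ⟨u, hu⟩ := ih
    refine ⟨C (c a) * ((C p)^s.card * (C d + ∑ i ∈ s, C (c i)) * X 0^s.card)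
      + (C p * X 0 + C (c a) * X 1) * u, ?_⟩
    rw [Finset.prod_insert ha, Finset.sum_insert ha, Finset.card_insert_of_notMem ha]
    linear_combination (C p * X 0 + C (c a) * X 1) * hu

private lemma span_swap {G H : MvPolynomial (Fin 2) ℤ}
    (h : (X 1 : MvPolynomial (Fin 2) ℤ)^2 ∣ G - H) :
    Ideal.span {G, (X 1:MvPolynomial (Fin 2) ℤ)^2} = Ideal.span {H, (X 1:MvPolynomial (Fin 2) ℤ)^2} := by
  obtain ⟨u, hu⟩ := h
  apply le_antisymm <;> rw [Ideal.span_le] <;> rintro x hx <;>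
    rcases Set.mem_insert_iff.mp hx with rfl | hx
  · rw [SetLike.mem_coe, Ideal.mem_span_pair]
    exact ⟨1, u, by linear_combination -hu⟩
  · rcases Set.mem_singleton_iff.mp hx with rfl
    exact Ideal.subset_span (Set.mem_insert_iff.mpr (Or.inr rfl))
  · rw [SetLike.mem_coe, Ideal.mem_span_pair]
    exact ⟨1, -u, by linear_combination hu⟩
  · rcases Set.mem_singleton_iff.mp hx with rfl
    exact Ideal.subset_span (Set.mem_insert_iff.mpr (Or.inr rfl))

-- the two monomial exponents
private noncomputable def m₁ (n : ℕ) : Fin 2 →₀ ℕ := Finsupp.single 0 (n+1)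
private noncomputable def m₂ (n : ℕ) : Fin 2 →₀ ℕ := Finsupp.single 0 n + Finsupp.single 1 1

private lemma not_le_m1_m2 (n : ℕ) : ¬ (m₂ n ≤ m₁ n) := by
  intro h
  have := h 1
  simp [m₁, m₂, Finsupp.single_apply] at this

private lemma not_le_m2_m1 (n : ℕ) : ¬ (m₁ n ≤ m₂ n) := by
  intro h
  have := h 0
  simp [m₁, m₂, Finsupp.single_apply] at this

private lemma not_le_x12_m1 (n : ℕ) : ¬ (Finsupp.single (1:Fin 2) 2 ≤ m₁ n) := by
  intro h
  have := h 1
  simp [m₁, Finsupp.single_apply] at this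

private lemma not_le_x12_m2 (n : ℕ) : ¬ (Finsupp.single (1:Fin 2) 2 ≤ m₂ n) := by
  intro h
  have := h 1
  simp [m₂, Finsupp.single_apply] at this

private lemma m1_ne_m2 (n : ℕ) : m₁ n ≠ m₂ n := by
  intro h
  have := DFunLike.congr_fun h 1
  simp [m₁, m₂, Finsupp.single_apply] at this

private lemma mem_span_nf (n : ℕ) (a t S : ℤ)
    (h : ((monomial (m₁ n)) a + (monomial (m₂ n)) t)
        ∈ Ideal.span {(monomial (m₁ n)) 1 + (monomial (m₂ n)) S, (X 1:MvPolynomial (Fin 2) ℤ)^2}) :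
    t = a * S := by
  rw [Ideal.mem_span_pair] at h
  obtain ⟨A, B, hAB⟩ := h
  rw [X_pow_eq_monomial] at hAB
  have h1 := congrArg (coeff (m₁ n)) hAB
  have h2 := congrArg (coeff (m₂ n)) hAB
  simp only [coeff_add, mul_add, coeff_mul_monomial', coeff_monomial] at h1 h2
  rw [if_pos (le_refl _), if_neg (not_le_m1_m2 n), if_neg (not_le_x12_m1 n),
      if_neg (fun hc : m₂ n = m₁ n => m1_ne_m2 n hc.symm)] at h1
  rw [if_neg (not_le_m2_m1 n), if_pos (le_refl (m₂ n)), if_neg (not_le_x12_m2 n),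
      if_neg (m1_ne_m2 n)] at h2
  simp at h1 h2
  rw [← h2, h1]

private lemma not_le_ss : ¬ (Finsupp.single (1:Fin 2) 1 ≤ Finsupp.single (0:Fin 2) 1) := by
  rw [Finsupp.single_le_iff]; simp [Finsupp.single_apply]

private lemma not_le_ss' : ¬ (Finsupp.single (0:Fin 2) 1 ≤ Finsupp.single (1:Fin 2) 1) := by
  rw [Finsupp.single_le_iff]; simp [Finsupp.single_apply]

private lemma CX_eq_monomial (a : ℤ) (i : Fin 2) (k : ℕ) :
    C a * (X i : MvPolynomial (Fin 2) ℤ) ^ k = monomial (Finsupp.single i k) a := by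
  rw [X_pow_eq_monomial, C_mul_monomial, mul_one]

private lemma CX_monomial (a : ℤ) (i : Fin 2) :
    C a * (X i : MvPolynomial (Fin 2) ℤ) = monomial (Finsupp.single i 1) a := by
  rw [← pow_one (X i : MvPolynomial (Fin 2) ℤ), CX_eq_monomial]

private lemma fin2cases (i : Fin 2) : i = 0 ∨ i = 1 := by fin_cases i <;> simp

private lemma aux_coeff (p q s : ℤ) (g : Fin 2 → MvPolynomial (Fin 2) ℤ)
    (hg0 : g 0 = C p * X 0 + C q * X 1) (hg1 : g 1 = C s * X 1)
    (f : MvPolynomial (Fin 2) ℤ) :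
    ∃ α β : ℤ, coeff (Finsupp.single 0 1) (aeval (R := ℤ) g f) = p * α ∧
      coeff (Finsupp.single 1 1) (aeval (R := ℤ) g f) = q * α + s * β := by
  induction f using MvPolynomial.induction_on with
  | C a =>
      refine ⟨0, 0, ?_, ?_⟩ <;>
        · rw [aeval_C, show (algebraMap ℤ (MvPolynomial (Fin 2) ℤ)) a = C a from rfl, coeff_C]
          simp [Finsupp.single_eq_zero, eq_comm]
  | add f₁ f₂ h₁ h₂ =>
      obtain ⟨α₁, β₁, ha₁, hb₁⟩ := h₁
      obtain ⟨α₂, β₂, ha₂, hb₂⟩ := h₂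
      exact ⟨α₁ + α₂, β₁ + β₂, by rw [map_add, coeff_add, ha₁, ha₂]; ring,
        by rw [map_add, coeff_add, hb₁, hb₂]; ring⟩
  | mul_X f₁ i h₁ =>
      obtain ⟨α, β, ha, hb⟩ := h₁
      rw [map_mul, aeval_X]
      rcases fin2cases i with rfl | rfl
      · have e : (aeval (R := ℤ) g f₁) * g 0
            = aeval (R := ℤ) g f₁ * monomial (Finsupp.single 0 1) p
              + aeval (R := ℤ) g f₁ * monomial (Finsupp.single 1 1) q := by
          rw [hg0, ← CX_monomial, ← CX_monomial]; ring
        refine ⟨coeff 0 (aeval (R := ℤ) g f₁), 0, ?_, ?_⟩ <;>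
          rw [e, coeff_add, coeff_mul_monomial', coeff_mul_monomial']
        · rw [if_pos (le_refl _), if_neg not_le_ss]
          simp [mul_comm]
        · rw [if_neg not_le_ss', if_pos (le_refl _)]
          simp [mul_comm]
      · have e : (aeval (R := ℤ) g f₁) * g 1
            = aeval (R := ℤ) g f₁ * monomial (Finsupp.single 1 1) s := by
          rw [hg1, ← CX_monomial]
        refine ⟨0, coeff 0 (aeval (R := ℤ) g f₁), ?_, ?_⟩ <;>
          rw [e, coeff_mul_monomial']
        · rw [if_neg not_le_ss]; simp
        · rw [if_pos (le_refl _)]; simp [mul_comm]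

private lemma C_X0_X1_monomial (a : ℤ) (k : ℕ) :
    C a * (X 0 : MvPolynomial (Fin 2) ℤ)^k * X 1
      = monomial (Finsupp.single 0 k + Finsupp.single 1 1) a := by
  rw [CX_eq_monomial,
    show (X 1 : MvPolynomial (Fin 2) ℤ) = monomial (Finsupp.single 1 1) 1 by
      rw [← pow_one (X 1 : MvPolynomial (Fin 2) ℤ), X_pow_eq_monomial],
    monomial_mul, mul_one]

private lemma nf_dvd (n : ℕ) (c : Fin n → ℤ) (p d : ℤ) :
    (X 1 : MvPolynomial (Fin 2) ℤ)^2 ∣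
      (C p * X 0 + C d * X 1) * ∏ i, (C p * X 0 + C (c i) * X 1)
        - (monomial (m₁ n) (p^(n+1)) + monomial (m₂ n) (p^n * (d + ∑ i, c i))) := by
  have h := key_dvd Finset.univ c p d
  rw [Finset.card_univ, Fintype.card_fin] at h
  have e1 : (monomial (m₁ n)) (p^(n+1)) = (C p)^(n+1) * (X 0 : MvPolynomial (Fin 2) ℤ)^(n+1) := by
    rw [show m₁ n = Finsupp.single 0 (n+1) from rfl, ← CX_eq_monomial, ← map_pow]
  have e2 : (monomial (m₂ n)) (p^n * (d + ∑ i, c i))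
      = (C p)^n * (C d + ∑ i, C (c i)) * (X 0 : MvPolynomial (Fin 2) ℤ)^n * X 1 := by
    rw [show m₂ n = Finsupp.single 0 n + Finsupp.single 1 1 from rfl, ← C_X0_X1_monomial,
      ← map_sum, ← map_add, ← map_pow, ← map_mul]
  rw [e1, e2]
  exact h

private lemma final_arith (n : ℕ) (p s q Sb Sb' : ℤ) (hp : p = 1 ∨ p = -1)
    (h : p^n * (q + ((n:ℤ)*q + Sb*s)) = p^(n+1) * Sb') :
    (p*s*Sb) ≡ Sb' [ZMOD ((n:ℤ)+1)] := by
  rw [Int.modEq_iff_dvd]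
  rcases hp with rfl | rfl
  · simp only [one_pow, one_mul] at h
    exact ⟨q, by linarith⟩
  · have key : ((-1:ℤ)^n)*((-1:ℤ)^n) = 1 := by
      rw [← pow_add, ← two_mul, pow_mul, neg_one_sq, one_pow]
    have hA : q + ((n:ℤ)*q + Sb*s) = -Sb' := by
      linear_combination ((-1:ℤ)^n) * h - (q + ((n:ℤ)*q + Sb*s) + Sb') * key
    exact ⟨-q, by linarith⟩

theorem stmt19 (n : ℕ) (hn : 1 < n) (b b' : Fin n → ℤ) :
    IsGradedIso
        (Ideal.span {(X 0 : MvPolynomial (Fin 2) ℤ) * ∏ i, (X 0 + C (b i) * X 1), X 1 ^ 2})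
        (Ideal.span {(X 0 : MvPolynomial (Fin 2) ℤ) * ∏ i, (X 0 + C (b' i) * X 1), X 1 ^ 2})
    ↔ ∃ ε : ℤ, (ε = 1 ∨ ε = -1) ∧ (ε * ∑ i, b i) ≡ (∑ i, b' i) [ZMOD ((n : ℤ) + 1)] := by
  constructor
  · rintro ⟨g, hhom, hbij, hmap⟩
    obtain ⟨p, q, hg0⟩ : ∃ p q, g 0 = C p * X 0 + C q * X 1 :=
      ⟨_, _, homog_one_decomp _ (hhom 0)⟩
    obtain ⟨r, s, hg1d⟩ : ∃ r s, g 1 = C r * X 0 + C s * X 1 :=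
      ⟨_, _, homog_one_decomp _ (hhom 1)⟩
    -- r = 0
    have hX2I : (X 1 : MvPolynomial (Fin 2) ℤ)^2
        ∈ Ideal.span {(X 0 : MvPolynomial (Fin 2) ℤ) * ∏ i, (X 0 + C (b i) * X 1), X 1 ^ 2} :=
      Ideal.subset_span (by simp)
    have hmem : (aeval (R := ℤ) g) (X 1 ^ 2)
        ∈ Ideal.span {(X 0 : MvPolynomial (Fin 2) ℤ) * ∏ i, (X 0 + C (b' i) * X 1), X 1 ^ 2} := by
      rw [← hmap]; exact Ideal.mem_map_of_mem _ hX2I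
    rw [Ideal.mem_span_pair] at hmem
    obtain ⟨A, B, hAB⟩ := hmem
    rw [show (aeval (R := ℤ) g) (X 1 ^ 2) = (C r * X 0 + C s * X 1)^2 by
      rw [map_pow, aeval_X, ← hg1d]] at hAB
    have hr : r = 0 := by
      have e1 : (aeval (R := ℤ) (![Polynomial.X, 0] : Fin 2 → Polynomial ℤ))
          ((X 0 : MvPolynomial (Fin 2) ℤ) * ∏ i, (X 0 + C (b' i) * X 1))
          = Polynomial.X ^ (n+1) := by
        rw [map_mul, map_prod]
        have hfac : ∀ i : Fin n, (aeval (R := ℤ) (![Polynomial.X, 0] : Fin 2 → Polynomial ℤ))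
            ((X 0 : MvPolynomial (Fin 2) ℤ) + C (b' i) * X 1) = Polynomial.X := by
          intro i
          rw [map_add, map_mul, aeval_X, aeval_X, aeval_C]
          simp
        rw [Finset.prod_congr rfl (fun i _ => hfac i), Finset.prod_const, Finset.card_univ,
          Fintype.card_fin, aeval_X]
        simp [pow_succ, mul_comm]
      have e2 : (aeval (R := ℤ) (![Polynomial.X, 0] : Fin 2 → Polynomial ℤ))
          ((X 1 : MvPolynomial (Fin 2) ℤ)^2) = 0 := by
        rw [map_pow, aeval_X]
        simp
      have e3 : (aeval (R := ℤ) (![Polynomial.X, 0] : Fin 2 → Polynomial ℤ))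
          ((C r * X 0 + C s * X 1 : MvPolynomial (Fin 2) ℤ)^2)
          = Polynomial.C (r^2) * Polynomial.X^2 := by
        rw [map_pow, map_add, map_mul, map_mul, aeval_X, aeval_X, aeval_C, aeval_C]
        simp only [Matrix.cons_val_zero, Matrix.cons_val_one, Matrix.head_cons, mul_zero,
          add_zero, algebraMap_int_eq, eq_intCast]
        rw [mul_pow]; push_cast; ring
      have heq := congrArg (aeval (R := ℤ) (![Polynomial.X, 0] : Fin 2 → Polynomial ℤ)) hAB
      rw [map_add, map_mul, e1, map_mul, e2, e3, mul_zero, add_zero] at heq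
      have hc : ((aeval (R := ℤ) (![Polynomial.X, 0] : Fin 2 → Polynomial ℤ)) A
          * Polynomial.X ^ (n+1)).coeff 2 = (Polynomial.C (r^2) * Polynomial.X^2).coeff 2 := by
        rw [heq]
      rw [Polynomial.coeff_mul_X_pow', Polynomial.coeff_C_mul, Polynomial.coeff_X_pow,
        if_neg (by omega), if_pos rfl, mul_one] at hc
      exact pow_eq_zero_iff two_ne_zero |>.mp hc.symm
    have hg1' : g 1 = C s * X 1 := by rw [hg1d, hr]; simp
    -- units
    obtain ⟨f₀, hf₀⟩ := hbij.2 (X 0)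
    obtain ⟨f₁, hf₁⟩ := hbij.2 (X 1)
    obtain ⟨α₀, β₀, ha₀, hb₀⟩ := aux_coeff p q s g hg0 hg1' f₀
    obtain ⟨α₁, β₁, ha₁, hb₁⟩ := aux_coeff p q s g hg0 hg1' f₁
    rw [hf₀] at ha₀ hb₀
    rw [hf₁] at ha₁ hb₁
    rw [coeff_X'] at ha₀ ha₁ hb₀ hb₁
    rw [if_pos rfl] at ha₀
    rw [if_neg (by intro hc; have := DFunLike.congr_fun hc 0; simp [Finsupp.single_apply] at this)] at ha₁
    rw [if_pos rfl] at hb₁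
    have hpu : p = 1 ∨ p = -1 :=
      Int.isUnit_iff.mp (IsUnit.of_mul_eq_one (a := p) α₀ ha₀.symm)
    have hpne : p ≠ 0 := by rcases hpu with rfl | rfl <;> norm_num
    have hα₁ : α₁ = 0 := by
      rcases mul_eq_zero.mp ha₁.symm with h | h
      · exact absurd h hpne
      · exact h
    have hsu : s = 1 ∨ s = -1 := by
      apply Int.isUnit_iff.mp (IsUnit.of_mul_eq_one (a := s) β₁ _)
      rw [hα₁] at hb₁; linarith
    -- normal form of J
    have hF'nf : (X 1 : MvPolynomial (Fin 2) ℤ)^2 ∣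
        (X 0 : MvPolynomial (Fin 2) ℤ) * ∏ i, (X 0 + C (b' i) * X 1)
          - (monomial (m₁ n) 1 + monomial (m₂ n) (∑ i, b' i)) := by
      have h := nf_dvd n b' 1 0
      rw [show ((1:ℤ)^(n+1)) = 1 from one_pow _] at h
      rw [show ((1:ℤ)^n * (0 + ∑ i, b' i)) = ∑ i, b' i by rw [one_pow, zero_add, one_mul]] at h
      rw [show ((C 1 * X 0 + C 0 * X 1 : MvPolynomial (Fin 2) ℤ)
          * ∏ i, (C 1 * X 0 + C (b' i) * X 1))
        = (X 0 : MvPolynomial (Fin 2) ℤ) * ∏ i, (X 0 + C (b' i) * X 1) by simp] at h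
      exact h
    have hJ : Ideal.span {(X 0 : MvPolynomial (Fin 2) ℤ) * ∏ i, (X 0 + C (b' i) * X 1), X 1 ^ 2}
        = Ideal.span {monomial (m₁ n) 1 + monomial (m₂ n) (∑ i, b' i),
            (X 1 : MvPolynomial (Fin 2) ℤ)^2} := span_swap hF'nf
    -- image of F_b
    have hφ : (aeval (R := ℤ) g) ((X 0 : MvPolynomial (Fin 2) ℤ) * ∏ i, (X 0 + C (b i) * X 1))
        = (C p * X 0 + C q * X 1) * ∏ i, (C p * X 0 + C (q + b i * s) * X 1) := by
      rw [map_mul, map_prod, aeval_X, hg0]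
      congr 1
      apply Finset.prod_congr rfl
      intro i _
      rw [map_add, map_mul, aeval_X, aeval_X, aeval_C, hg0, hg1']
      rw [show (algebraMap ℤ (MvPolynomial (Fin 2) ℤ)) (b i) = C (b i) from rfl]
      rw [show (C (q + b i * s) : MvPolynomial (Fin 2) ℤ) = C q + C (b i) * C s by
        rw [← map_mul, ← map_add]]
      ring
    have hFbJ : (aeval (R := ℤ) g) ((X 0 : MvPolynomial (Fin 2) ℤ) * ∏ i, (X 0 + C (b i) * X 1))
        ∈ Ideal.span {monomial (m₁ n) 1 + monomial (m₂ n) (∑ i, b' i),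
            (X 1 : MvPolynomial (Fin 2) ℤ)^2} := by
      rw [← hJ, ← hmap]
      exact Ideal.mem_map_of_mem _ (Ideal.subset_span (by simp))
    obtain ⟨u, hu⟩ := nf_dvd n (fun i => q + b i * s) p q
    have hX2J : (X 1 : MvPolynomial (Fin 2) ℤ)^2
        ∈ Ideal.span {monomial (m₁ n) 1 + monomial (m₂ n) (∑ i, b' i),
            (X 1 : MvPolynomial (Fin 2) ℤ)^2} := Ideal.subset_span (by simp)
    have hNb : (monomial (m₁ n) (p^(n+1))
          + monomial (m₂ n) (p^n * (q + ∑ i, (q + b i * s))))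
        ∈ Ideal.span {monomial (m₁ n) 1 + monomial (m₂ n) (∑ i, b' i),
            (X 1 : MvPolynomial (Fin 2) ℤ)^2} := by
      have hsub := Ideal.sub_mem _ hFbJ (Ideal.mul_mem_right u _ hX2J)
      rw [hφ] at hsub
      convert hsub using 1
      linear_combination -hu
    have hkey := mem_span_nf n _ _ _ hNb
    refine ⟨p * s, ?_, ?_⟩
    · rcases hpu with rfl | rfl <;> rcases hsu with rfl | rfl <;> norm_num
    · apply final_arith n p s q (∑ i, b i) (∑ i, b' i) hpu
      have hsumeq : ∑ i, (q + b i * s) = (n:ℤ) * q + (∑ i, b i) * s := by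
        rw [Finset.sum_add_distrib, Finset.sum_const, Finset.card_univ, Fintype.card_fin,
          ← Finset.sum_mul, nsmul_eq_mul]
      rw [← hkey, hsumeq]
  · rintro ⟨e, he, hmod⟩
    have he2 : e * e = 1 := by rcases he with rfl | rfl <;> norm_num
    obtain ⟨w, hw⟩ := Int.modEq_iff_dvd.mp hmod
    set g : Fin 2 → MvPolynomial (Fin 2) ℤ := ![X 0 + C w * X 1, C e * X 1] with hgdef
    set gi : Fin 2 → MvPolynomial (Fin 2) ℤ := ![X 0 - C (w*e) * X 1, C e * X 1] with hgidef
    have hg0 : g 0 = X 0 + C w * X 1 := rfl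
    have hg1 : g 1 = C e * X 1 := rfl
    have hgi0 : gi 0 = X 0 - C (w*e) * X 1 := rfl
    have hgi1 : gi 1 = C e * X 1 := rfl
    have hCe : (C e : MvPolynomial (Fin 2) ℤ) * C e = 1 := by
      rw [← map_mul, he2, map_one]
    have comp1 : ∀ f, aeval (R := ℤ) g (aeval (R := ℤ) gi f) = f := by
      intro f
      rw [← AlgHom.comp_apply, comp_aeval]
      have hfun : (fun i => aeval (R := ℤ) g (gi i)) = X := by
        funext i; rcases fin2cases i with rfl | rfl
        · rw [hgi0, map_sub, map_mul, aeval_X, aeval_X, aeval_C, hg0, hg1]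
          rw [show (algebraMap ℤ (MvPolynomial (Fin 2) ℤ)) (w*e) = C w * C e from by
            rw [map_mul]; rfl]
          linear_combination (-(C w * X 1) : MvPolynomial (Fin 2) ℤ) * hCe
        · rw [hgi1, map_mul, aeval_C, aeval_X, hg1]
          rw [show (algebraMap ℤ (MvPolynomial (Fin 2) ℤ)) e = C e from rfl]
          linear_combination (X 1 : MvPolynomial (Fin 2) ℤ) * hCe
      rw [hfun, aeval_X_left_apply]
    have comp2 : ∀ f, aeval (R := ℤ) gi (aeval (R := ℤ) g f) = f := by
      intro f
      rw [← AlgHom.comp_apply, comp_aeval]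
      have hfun : (fun i => aeval (R := ℤ) gi (g i)) = X := by
        funext i; rcases fin2cases i with rfl | rfl
        · rw [hg0, map_add, map_mul, aeval_X, aeval_X, aeval_C, hgi0, hgi1]
          rw [show (algebraMap ℤ (MvPolynomial (Fin 2) ℤ)) w = C w from rfl]
          rw [show (C (w*e) : MvPolynomial (Fin 2) ℤ) = C w * C e from by rw [map_mul]]
          ring
        · rw [hg1, map_mul, aeval_C, aeval_X, hgi1]
          rw [show (algebraMap ℤ (MvPolynomial (Fin 2) ℤ)) e = C e from rfl]
          linear_combination (X 1 : MvPolynomial (Fin 2) ℤ) * hCe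
      rw [hfun, aeval_X_left_apply]
    refine ⟨g, ?_, ?_, ?_⟩
    · intro i; rcases fin2cases i with rfl | rfl
      · rw [hg0]
        exact (isHomogeneous_X ℤ 0).add (isHomogeneous_C_mul_X w 1)
      · rw [hg1]
        exact isHomogeneous_C_mul_X e 1
    · constructor
      · intro x y hxy
        have := congrArg (aeval (R := ℤ) gi) hxy
        rwa [comp2, comp2] at this
      · intro y
        exact ⟨aeval (R := ℤ) gi y, comp1 y⟩
    · rw [Ideal.map_span, Set.image_insert_eq, Set.image_singleton]
      have hX2 : aeval (R := ℤ) g ((X 1 : MvPolynomial (Fin 2) ℤ) ^ 2) = X 1 ^ 2 := by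
        rw [map_pow, aeval_X, hg1,
          show ((C e * X 1 : MvPolynomial (Fin 2) ℤ))^2 = (C e * C e) * X 1^2 by ring,
          hCe, one_mul]
      rw [hX2]
      have hφF : aeval (R := ℤ) g ((X 0 : MvPolynomial (Fin 2) ℤ) * ∏ i, (X 0 + C (b i) * X 1))
          = (C 1 * X 0 + C w * X 1) * ∏ i, (C 1 * X 0 + C (w + b i * e) * X 1) := by
        rw [map_mul, map_prod, aeval_X, hg0]
        rw [show ((C 1 * X 0 + C w * X 1 : MvPolynomial (Fin 2) ℤ)) = X 0 + C w * X 1 by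
          rw [C_1, one_mul]]
        congr 1
        apply Finset.prod_congr rfl
        intro i _
        rw [map_add, map_mul, aeval_X, aeval_X, aeval_C, hg0, hg1]
        rw [show (algebraMap ℤ (MvPolynomial (Fin 2) ℤ)) (b i) = C (b i) from rfl]
        rw [show (C (w + b i * e) : MvPolynomial (Fin 2) ℤ) = C w + C (b i) * C e from by
          rw [← map_mul, ← map_add], C_1, one_mul]
        ring
      rw [hφF]
      have hsum : w + ∑ i, (w + b i * e) = ∑ i, b' i := by
        rw [Finset.sum_add_distrib, Finset.sum_const, Finset.card_univ, Fintype.card_fin,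
          ← Finset.sum_mul, nsmul_eq_mul]
        linarith
      have d1 := nf_dvd n (fun i => w + b i * e) 1 w
      have d2 := nf_dvd n b' 1 0
      rw [show ((C 1 * X 0 + C 0 * X 1 : MvPolynomial (Fin 2) ℤ)
          * ∏ i, (C 1 * X 0 + C (b' i) * X 1))
        = (X 0 : MvPolynomial (Fin 2) ℤ) * ∏ i, (X 0 + C (b' i) * X 1) by simp] at d2
      apply span_swap
      have := dvd_sub d1 d2
      rw [show ((1:ℤ)^n * (w + ∑ i, (w + b i * e))) = (1:ℤ)^n * (0 + ∑ i, b' i) by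
        rw [hsum, zero_add]] at this
      convert this using 1
      ring
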